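/- Let k ≥ 2 be an integer, τ > 2 a real number, and let (u_i)_{i≥-1} be a sequence of strictly positive reals with u_0 = 1 and u_{-1} + u_1 < τ, satisfying the SOS boundary-law recurrence u_{i+1} = (u_{-1} + u_1 - τ)·u_i^k + τ·u_i - u_{i-1} for all i ≥ 0. Then for every i ≥ 1 one has 0 < u_i < x_0 · min{ ((k-1)/k^{k/(k-1)})·τ , 1 }, where x_0 = (τ/(τ - u_{-1} - u_1))^{1/(k-1)}. -/

import Mathlib

/-- If a strictly positive sequence `(u i)_{i ≥ -1}` with `u 0 = 1` and
`u (-1) + u 1 < τ` satisfies the SOS boundary-law recurrence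
`u (i+1) = (u (-1) + u 1 - τ) * (u i)^k + τ * u i - u (i-1)` for all `i ≥ 0`,
then for every `i ≥ 1` one has
`0 < u i < x₀ * min (((k-1)/k^(k/(k-1))) * τ) 1`,
where `x₀ = (τ / (τ - u (-1) - u 1))^(1/(k-1))`. -/
theorem sos_bounded_sequence
    (k : ℕ) (hk : 2 ≤ k) (τ : ℝ) (hτ : 2 < τ)
    (u : ℤ → ℝ)
    (hpos : ∀ i : ℤ, -1 ≤ i → 0 < u i)
    (hu0 : u 0 = 1)
    (hsum : u (-1) + u 1 < τ)
    (hrec : ∀ i : ℤ, 0 ≤ i →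
      u (i + 1) = (u (-1) + u 1 - τ) * (u i) ^ k + τ * u i - u (i - 1)) :
    ∀ i : ℤ, 1 ≤ i →
      0 < u i ∧
      u i < (τ / (τ - u (-1) - u 1)) ^ ((1 : ℝ) / ((k : ℝ) - 1)) *
        min ((((k : ℝ) - 1) / (k : ℝ) ^ ((k : ℝ) / ((k : ℝ) - 1)) * τ)) 1 := by
  have hkR : (2:ℝ) ≤ (k:ℝ) := by exact_mod_cast hk
  have hk1 : (0:ℝ) < (k:ℝ) - 1 := by linarith
  have hk1ne : ((k:ℝ) - 1) ≠ 0 := ne_of_gt hk1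
  have hkpos : (0:ℝ) < (k:ℝ) := by linarith
  set c : ℝ := τ - u (-1) - u 1 with hc_def
  have hc : 0 < c := by simp only [hc_def]; linarith
  have hτ0 : 0 < τ := by linarith
  have hdiv : 0 < τ / c := div_pos hτ0 hc
  set s : ℝ := (1:ℝ) / ((k:ℝ) - 1) with hs_def
  have hs_mul : s * ((k:ℝ) - 1) = 1 := by
    rw [hs_def]; field_simp
  -- key rpow computation
  have pow_eq : ∀ x : ℝ, 0 < x → (x ^ s) ^ (k - 1) = x := by
    intro x hx
    rw [← Real.rpow_natCast (x ^ s) (k - 1), ← Real.rpow_mul hx.le]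
    have : s * ((k - 1 : ℕ) : ℝ) = 1 := by
      rw [Nat.cast_sub (by omega : 1 ≤ k)]; push_cast; exact hs_mul
    rw [this, Real.rpow_one]
  set x₀ : ℝ := (τ / c) ^ s with hx₀_def
  have hx₀pos : 0 < x₀ := Real.rpow_pos_of_pos hdiv s
  have hx₀pow : c * x₀ ^ (k - 1) = τ := by
    rw [hx₀_def, pow_eq _ hdiv]; field_simp
  -- Step 1: u j < x₀ for all j ≥ 0
  have hlt_x₀ : ∀ j : ℤ, 0 ≤ j → u j < x₀ := by
    intro j hj
    by_contra h
    push_neg at h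
    have huj : 0 < u j := hpos j (by linarith)
    have h1 : τ ≤ c * (u j) ^ (k - 1) := by
      rw [← hx₀pow]
      exact mul_le_mul_of_nonneg_left (pow_le_pow_left₀ hx₀pos.le h _) hc.le
    have hujk : (u j) ^ k = (u j) ^ (k - 1) * u j := by
      rw [← pow_succ]; congr 1; omega
    have h2 : τ * u j - c * (u j) ^ k ≤ 0 := by
      rw [hujk]
      nlinarith [mul_le_mul_of_nonneg_right h1 huj.le]
    have h3 : u (j + 1) = -c * (u j) ^ k + τ * u j - u (j - 1) := by
      rw [hrec j hj, hc_def]; ring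
    have hp1 := hpos (j + 1) (by linarith)
    have hp2 := hpos (j - 1) (by linarith)
    linarith
  -- Step 2: the map x ↦ τx - cx^k is bounded by τ * x⋆ * (k-1)/k
  set xs : ℝ := (τ / (c * (k:ℝ))) ^ s with hxs_def
  have hdiv2 : 0 < τ / (c * (k:ℝ)) := div_pos hτ0 (by positivity)
  have hxspos : 0 < xs := Real.rpow_pos_of_pos hdiv2 s
  have hck1 : c * xs ^ (k - 1) = τ / (k:ℝ) := by
    rw [hxs_def, pow_eq _ hdiv2]; field_simp
  have hstep2 : ∀ x : ℝ, 0 < x →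
      τ * x - c * x ^ k ≤ τ * xs * ((k:ℝ) - 1) / (k:ℝ) := by
    intro x hx
    have ht0 : 0 < x / xs := div_pos hx hxspos
    set t : ℝ := x / xs with ht_def
    have hxeq : x = t * xs := by rw [ht_def]; field_simp
    have bern : 1 + (k:ℝ) * (t - 1) ≤ t ^ k := by
      have h := one_add_mul_le_pow (show (-2:ℝ) ≤ t - 1 by linarith) k
      have h2 : (1:ℝ) + (t - 1) = t := by ring
      rwa [h2] at h
    rw [hxeq, mul_pow]
    have hxsk : c * xs ^ k = τ / (k:ℝ) * xs := by
      have hkk : xs ^ k = xs ^ (k - 1) * xs := by rw [← pow_succ]; congr 1; omega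
      rw [hkk, ← mul_assoc, hck1]
    have hrw : c * (t ^ k * xs ^ k) = t ^ k * (τ / (k:ℝ) * xs) := by
      rw [← hxsk]; ring
    rw [hrw]
    set q : ℝ := τ / (k:ℝ) with hq_def
    have hq : q * (k:ℝ) = τ := by rw [hq_def]; field_simp
    have hR : τ * xs * ((k:ℝ) - 1) / (k:ℝ) = q * xs * ((k:ℝ) - 1) := by
      rw [hq_def]; field_simp
    rw [hR, ← hq]
    have hqpos : 0 < q := by rw [hq_def]; positivity
    have hmul := mul_le_mul_of_nonneg_left bern (by positivity : (0:ℝ) ≤ q * xs)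
    nlinarith [hmul]
  -- x⋆ relation with x₀ and the bound B = x₀ * M
  have hkspos : 0 < (k:ℝ) ^ s := Real.rpow_pos_of_pos hkpos s
  have hxs_x0 : xs = x₀ / (k:ℝ) ^ s := by
    rw [hxs_def, hx₀_def, ← div_div, Real.div_rpow hdiv.le hkpos.le]
  have hkexp : (k:ℝ) ^ s * (k:ℝ) = (k:ℝ) ^ ((k:ℝ) / ((k:ℝ) - 1)) := by
    have he : (k:ℝ)/((k:ℝ)-1) = s + 1 := by rw [hs_def]; field_simp; ring
    rw [he, Real.rpow_add hkpos, Real.rpow_one]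
  have hBM : τ * xs * ((k:ℝ) - 1) / (k:ℝ) =
      x₀ * (((k:ℝ) - 1) / (k:ℝ) ^ ((k:ℝ) / ((k:ℝ) - 1)) * τ) := by
    rw [hxs_x0, ← hkexp]
    field_simp
  -- conclude
  intro i hi
  refine ⟨hpos i (by linarith), ?_⟩
  have hA : u i < x₀ * (((k:ℝ) - 1) / (k:ℝ) ^ ((k:ℝ) / ((k:ℝ) - 1)) * τ) := by
    have h1 := hrec (i - 1) (by linarith)
    rw [sub_add_cancel] at h1
    have h3 : u i = -c * (u (i-1)) ^ k + τ * u (i-1) - u (i - 1 - 1) := by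
      rw [h1, hc_def]; ring
    have hp1 : 0 < u (i - 1) := hpos _ (by linarith)
    have hp2 : 0 < u (i - 1 - 1) := hpos _ (by linarith)
    have h4 := hstep2 (u (i-1)) hp1
    rw [← hBM]
    linarith [h3, h4, hp2]
  have hB : u i < x₀ := hlt_x₀ i (by linarith)
  rcases le_total (((k:ℝ) - 1) / (k:ℝ) ^ ((k:ℝ) / ((k:ℝ) - 1)) * τ) 1 with h | h
  · rw [min_eq_left h]; exact hA
  · rw [min_eq_right h, mul_one]; exact hB
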